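/- A reversible Mealy automaton A = (Q, Σ, δ, ρ) generates a finite semigroup if and only if the sizes of the connected components of its powers are bounded: the semigroup ⟨A⟩⁺ is finite if and only if there exists N such that for every n ≥ 1 and every u ∈ Qⁿ, the connected component of u in A^n has cardinality at most N. -/
import Mathlib


/-!
Mealy automata: common definitions.

A Mealy automaton on stateset `Q` and alphabet `Γ` is given by transition
functions `δ : Γ → Q → Q` (for each input letter) and output functions
`ρ : Q → Γ → Γ` (for each state); it has a transition `x —i|j→ y` exactly
when `δ i x = y` and `ρ x i = j`.
-/

/-- Extended output function `ρ_x : Γ* → Γ*` of a single state. -/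
def rhoStar {Q Γ : Type*} (δ : Γ → Q → Q) (ρ : Q → Γ → Γ) : Q → List Γ → List Γ
  | _, [] => []
  | x, i :: s => ρ x i :: rhoStar δ ρ (δ i x) s

/-- `ρ_u : Γ* → Γ*` for a word `u = x₁⋯x_n` of states: `ρ_u = ρ_{x_n} ∘ ⋯ ∘ ρ_{x₁}`. -/
def rhoWord {Q Γ : Type*} (δ : Γ → Q → Q) (ρ : Q → Γ → Γ) : List Q → List Γ → List Γ
  | [], s => s
  | x :: u, s => rhoWord δ ρ u (rhoStar δ ρ x s)

/-- `ρ_u : Γ → Γ` on single letters (the output function of the power automaton). -/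
def rhoLetter {Q Γ : Type*} (ρ : Q → Γ → Γ) : List Q → Γ → Γ
  | [], i => i
  | x :: u, i => rhoLetter ρ u (ρ x i)

/-- Extended transition function `δ_i : Q* → Q*` (the transition function of powers). -/
def deltaStar {Q Γ : Type*} (δ : Γ → Q → Q) (ρ : Q → Γ → Γ) : Γ → List Q → List Q
  | _, [] => []
  | i, x :: u => δ i x :: deltaStar δ ρ (ρ x i) u

/-- Sequential application `δ_s = δ_{s_n} ∘ ⋯ ∘ δ_{s₁}` of the letters of a word `s`. -/
def applyWord {S Γ : Type*} (d : Γ → S → S) : List Γ → S → S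
  | [], x => x
  | i :: s, x => applyWord d s (d i x)

/-- The orbit `{δ_s(x) : s ∈ Γ*}` of a state: for reversible automata this is
exactly the (strongly) connected component of `x`. -/
def orbitOf {S Γ : Type*} (d : Γ → S → S) (x : S) : Set S :=
  {y | ∃ s : List Γ, applyWord d s x = y}

/-- An automaton is invertible when every output function is a permutation. -/
def MInvertible {Q Γ : Type*} (ρ : Q → Γ → Γ) : Prop := ∀ x, Function.Bijective (ρ x)

/-- An automaton is reversible when every transition function is a permutation. -/
def MReversible {Q Γ : Type*} (δ : Γ → Q → Q) : Prop := ∀ i, Function.Bijective (δ i)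

/-- Coreversibility: `δ_i(y) = δ_{i'}(z)` and `ρ_y(i) = ρ_z(i')` imply `y = z`. -/
def MCoreversible {Q Γ : Type*} (δ : Γ → Q → Q) (ρ : Q → Γ → Γ) : Prop :=
  ∀ y z : Q, ∀ i i' : Γ, δ i y = δ i' z → ρ y i = ρ z i' → y = z

/-- Bireversible: invertible, reversible and coreversible. -/
def MBireversible {Q Γ : Type*} (δ : Γ → Q → Q) (ρ : Q → Γ → Γ) : Prop :=
  MInvertible ρ ∧ MReversible δ ∧ MCoreversible δ ρ

/-- Connectedness: every state is reachable from every state. -/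
def MConnected {Q Γ : Type*} (δ : Γ → Q → Q) : Prop :=
  ∀ x y : Q, ∃ s : List Γ, applyWord δ s x = y

/-- Invertibility of a component `C` (as an automaton with stateset `C`). -/
def CompInvertible {S Γ : Type*} (r : S → Γ → Γ) (C : Set S) : Prop :=
  ∀ x ∈ C, Function.Bijective (r x)

/-- Reversibility of a component `C`: each transition function permutes `C`. -/
def CompReversible {S Γ : Type*} (d : Γ → S → S) (C : Set S) : Prop :=
  ∀ i : Γ, Set.BijOn (d i) C C

/-- Coreversibility of a component `C` (as an automaton with stateset `C`). -/
def CompCoreversible {S Γ : Type*} (d : Γ → S → S) (r : S → Γ → Γ) (C : Set S) : Prop :=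
  ∀ y ∈ C, ∀ z ∈ C, ∀ i i' : Γ, d i y = d i' z → r y i = r z i' → y = z

/-- Bireversibility of a component `C` (as an automaton with stateset `C`). -/
def CompBireversible {S Γ : Type*} (d : Γ → S → S) (r : S → Γ → Γ) (C : Set S) : Prop :=
  CompInvertible r C ∧ CompReversible d C ∧ CompCoreversible d r C

/-- Transition functions of the product `A × B` of two Mealy automata. -/
def prodD {Q Q' Γ : Type*} (δ : Γ → Q → Q) (ρ : Q → Γ → Γ) (δ' : Γ → Q' → Q') :
    Γ → Q × Q' → Q × Q' :=
  fun i p => (δ i p.1, δ' (ρ p.1 i) p.2)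

/-- Output functions of the product `A × B` of two Mealy automata. -/
def prodR {Q Q' Γ : Type*} (ρ : Q → Γ → Γ) (ρ' : Q' → Γ → Γ) : Q × Q' → Γ → Γ :=
  fun p i => ρ' p.2 (ρ p.1 i)

/-- `u^n`: the `n`-fold concatenation of a word with itself. -/
def wordPow {Q : Type*} (u : List Q) : ℕ → List Q
  | 0 => []
  | n + 1 => u ++ wordPow u n


/-- Auxiliary: run function of a finite machine. -/
def runM {W Γ : Type*} (d : Γ → W → W) (r : W → Γ → Γ) : W → List Γ → List Γ
  | _, [] => []
  | q, i :: s => r q i :: runM d r (d i q) s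

theorem applyWord_append' {S Γ : Type*} (d : Γ → S → S) (s t : List Γ) (x : S) :
    applyWord d (s ++ t) x = applyWord d t (applyWord d s x) := by
  induction s generalizing x with
  | nil => rfl
  | cons i s ih => simp [applyWord, ih]

theorem rhoWord_nil' {Q Γ : Type*} (δ : Γ → Q → Q) (ρ : Q → Γ → Γ) (u : List Q) :
    rhoWord δ ρ u [] = [] := by
  induction u with
  | nil => rfl
  | cons x u ih => simpa [rhoWord, rhoStar] using ih

theorem rhoWord_cons' {Q Γ : Type*} (δ : Γ → Q → Q) (ρ : Q → Γ → Γ) (u : List Q) (i : Γ)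
    (s : List Γ) :
    rhoWord δ ρ u (i :: s) = rhoLetter ρ u i :: rhoWord δ ρ (deltaStar δ ρ i u) s := by
  induction u generalizing i s with
  | nil => rfl
  | cons x u ih => simp [rhoWord, rhoStar, rhoLetter, deltaStar, ih]

theorem deltaStar_length' {Q Γ : Type*} (δ : Γ → Q → Q) (ρ : Q → Γ → Γ) (i : Γ) (u : List Q) :
    (deltaStar δ ρ i u).length = u.length := by
  induction u generalizing i with
  | nil => rfl
  | cons x u ih => simp [deltaStar, ih]

theorem applyWord_deltaStar_length' {Q Γ : Type*} (δ : Γ → Q → Q) (ρ : Q → Γ → Γ)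
    (s : List Γ) (u : List Q) :
    (applyWord (deltaStar δ ρ) s u).length = u.length := by
  induction s generalizing u with
  | nil => rfl
  | cons i s ih => simp [applyWord, ih, deltaStar_length']

theorem applyWord_deltaStar_cons' {Q Γ : Type*} (δ : Γ → Q → Q) (ρ : Q → Γ → Γ)
    (s : List Γ) (x : Q) (u : List Q) :
    applyWord (deltaStar δ ρ) s (x :: u)
      = applyWord δ s x :: applyWord (deltaStar δ ρ) (rhoStar δ ρ x s) u := by
  induction s generalizing x u with
  | nil => rfl
  | cons i s ih => simp [applyWord, deltaStar, rhoStar, ih]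

theorem applyWord_deltaStar_nil' {Q Γ : Type*} (δ : Γ → Q → Q) (ρ : Q → Γ → Γ) (s : List Γ) :
    applyWord (deltaStar δ ρ) s ([] : List Q) = [] := by
  induction s with
  | nil => rfl
  | cons i s ih => simpa [applyWord, deltaStar] using ih

/-- A reversible Mealy automaton generates a finite
semigroup if and only if the sizes of the connected components of its powers
are bounded. -/
theorem finite_semigroup_iff_bounded_components
    {Q Γ : Type*} [Fintype Q] [Fintype Γ] [Nonempty Q] [Nonempty Γ]
    (δ : Γ → Q → Q) (ρ : Q → Γ → Γ)
    (hRev : MReversible δ) :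
    Set.Finite {f : List Γ → List Γ | ∃ u : List Q, u ≠ [] ∧ rhoWord δ ρ u = f} ↔
      ∃ N : ℕ, ∀ n : ℕ, 1 ≤ n → ∀ u : List Q, u.length = n →
        (orbitOf (deltaStar δ ρ) u).ncard ≤ N := by
  classical
  constructor
  · -- finite semigroup ⇒ bounded components
    intro hS
    set S : Set (List Γ → List Γ) :=
      {f : List Γ → List Γ | ∃ u : List Q, u ≠ [] ∧ rhoWord δ ρ u = f} with hSdef
    haveI : Finite ↥S := hS.to_subtype
    set T := ((↥S → Q → Q) × (Q → Q)) with hTdef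
    haveI : Finite T := by infer_instance
    set Θ : List Γ → T := fun s => (fun g => applyWord δ (g.1 s), applyWord δ s) with hΘ
    have hstep : ∀ s t : List Γ, Θ s = Θ t → ∀ x : Q,
        Θ (rhoStar δ ρ x s) = Θ (rhoStar δ ρ x t) := by
      intro s t h x
      have hx : rhoWord δ ρ [x] ∈ S := ⟨[x], List.cons_ne_nil _ _, rfl⟩
      have key : ∀ g : ↥S, ∃ g' : ↥S,
          ∀ w' : List Γ, g.1 (rhoStar δ ρ x w') = g'.1 w' := by
        intro g
        obtain ⟨v, hv, hgv⟩ := g.2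
        refine ⟨⟨rhoWord δ ρ (x :: v), ⟨x :: v, List.cons_ne_nil _ _, rfl⟩⟩, ?_⟩
        intro w'; simp [← hgv, rhoWord]
      refine Prod.ext ?_ ?_
      · funext g
        obtain ⟨g', hg2⟩ := key g
        have h1 : (Θ (rhoStar δ ρ x s)).1 g = (Θ s).1 g' := by
          simp only [hΘ]; rw [hg2 s]
        have h2 : (Θ (rhoStar δ ρ x t)).1 g = (Θ t).1 g' := by
          simp only [hΘ]; rw [hg2 t]
        rw [h1, h2, h]
      · have h1 : (Θ (rhoStar δ ρ x s)).2 = (Θ s).1 ⟨rhoWord δ ρ [x], hx⟩ := by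
          simp only [hΘ]; rfl
        have h2 : (Θ (rhoStar δ ρ x t)).2 = (Θ t).1 ⟨rhoWord δ ρ [x], hx⟩ := by
          simp only [hΘ]; rfl
        rw [h1, h2, h]
    have main : ∀ (u : List Q) (s t : List Γ), Θ s = Θ t →
        applyWord (deltaStar δ ρ) s u = applyWord (deltaStar δ ρ) t u := by
      intro u
      induction u with
      | nil => intro s t _; rw [applyWord_deltaStar_nil', applyWord_deltaStar_nil']
      | cons x u ih =>
        intro s t h
        rw [applyWord_deltaStar_cons', applyWord_deltaStar_cons']
        have hhead : applyWord δ s x = applyWord δ t x := by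
          have := congrArg Prod.snd h
          exact congrFun this x
        rw [hhead, ih _ _ (hstep s t h x)]
    refine ⟨Nat.card T, ?_⟩
    intro n _ u _
    set σ : T → List Γ := Function.invFun Θ with hσ
    have horb : orbitOf (deltaStar δ ρ) u
        = (fun θ : T => applyWord (deltaStar δ ρ) (σ θ) u) '' (Set.range Θ) := by
      ext v
      constructor
      · rintro ⟨s, rfl⟩
        refine ⟨Θ s, ⟨s, rfl⟩, ?_⟩
        exact main u _ _ (Function.invFun_eq ⟨s, rfl⟩)
      · rintro ⟨θ, ⟨s, rfl⟩, rfl⟩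
        exact ⟨σ (Θ s), rfl⟩
    rw [horb]
    calc ((fun θ : T => applyWord (deltaStar δ ρ) (σ θ) u) '' (Set.range Θ)).ncard
        ≤ (Set.range Θ).ncard := Set.ncard_image_le (Set.range Θ).toFinite
      _ ≤ (Set.univ : Set T).ncard :=
          Set.ncard_le_ncard (Set.subset_univ _) Set.finite_univ
      _ = Nat.card T := Set.ncard_univ T
  · -- bounded components ⇒ finite semigroup
    rintro ⟨N, hN⟩
    set Φ : ((Γ → Fin (N + 1) → Fin (N + 1)) × (Fin (N + 1) → Γ → Γ) × Fin (N + 1)) →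
        (List Γ → List Γ) := fun p => runM p.1 p.2.1 p.2.2 with hΦ
    refine Set.Finite.subset (Set.finite_range Φ) ?_
    rintro f ⟨u, hu, rfl⟩
    set C : Set (List Q) := orbitOf (deltaStar δ ρ) u with hC
    have hmemC : u ∈ C := ⟨[], rfl⟩
    have hclosed : ∀ i : Γ, ∀ v ∈ C, deltaStar δ ρ i v ∈ C := by
      rintro i v ⟨s, rfl⟩
      exact ⟨s ++ [i], by rw [applyWord_append']; rfl⟩
    have hfin : C.Finite := by
      refine Set.Finite.subset (List.finite_length_eq Q u.length) ?_
      rintro v ⟨s, rfl⟩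
      exact applyWord_deltaStar_length' δ ρ s u
    have hcard : C.ncard ≤ N := by
      refine hN u.length ?_ u rfl
      cases u with
      | nil => exact absurd rfl hu
      | cons x u => simp
    haveI : Fintype ↥C := hfin.fintype
    have hcardC : Fintype.card ↥C = C.ncard := by
      rw [← Nat.card_coe_set_eq, Nat.card_eq_fintype_card]
    have hcard' : Fintype.card ↥C ≤ Fintype.card (Fin (N + 1)) := by
      have h1 : Fintype.card (Fin (N + 1)) = N + 1 := Fintype.card_fin (N + 1)
      omega
    obtain ⟨e⟩ : Nonempty (↥C ↪ Fin (N + 1)) :=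
      Function.Embedding.nonempty_of_card_le hcard'
    set p : Fin (N + 1) → Option ↥C :=
      fun q => if h : ∃ v : ↥C, e v = q then some h.choose else none with hp
    have hpe : ∀ v : ↥C, p (e v) = some v := by
      intro v
      have h : ∃ w : ↥C, e w = e v := ⟨v, rfl⟩
      have hv : h.choose = v := e.injective h.choose_spec
      simp only [hp, dif_pos h, hv]
    set d : Γ → Fin (N + 1) → Fin (N + 1) := fun i q =>
      match p q with
      | some v => e ⟨deltaStar δ ρ i v.1, hclosed i v.1 v.2⟩
      | none => q with hd
    set r : Fin (N + 1) → Γ → Γ := fun q i =>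
      match p q with
      | some v => rhoLetter ρ v.1 i
      | none => i with hr
    have hrun : ∀ (s : List Γ) (v : ↥C), runM d r (e v) s = rhoWord δ ρ v.1 s := by
      intro s
      induction s with
      | nil => intro v; rw [rhoWord_nil']; rfl
      | cons i s ih =>
        intro v
        rw [rhoWord_cons']
        show r (e v) i :: runM d r (d i (e v)) s = _
        have h1 : r (e v) i = rhoLetter ρ v.1 i := by
          simp only [hr, hpe v]
        have h2 : d i (e v) = e ⟨deltaStar δ ρ i v.1, hclosed i v.1 v.2⟩ := by
          simp only [hd, hpe v]
        rw [h1, h2, ih ⟨deltaStar δ ρ i v.1, hclosed i v.1 v.2⟩]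
    refine ⟨(d, r, e ⟨u, hmemC⟩), ?_⟩
    funext s
    exact hrun s ⟨u, hmemC⟩
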